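/- Let n > 2k ≥ 2 and 0 < δ < η < 1. Suppose w : [0,η] → R is C^2 with w'(0) = 0, w(η) = 0, and ∂_r(r^{n-k}[w'(r)]^k) = C_{n,k} r^{n-1}(r²+δ²)^{-k} for 0 < r < η, where C_{n,k} > 0. Then there exists c_{n,k} > 0 (independent of δ) such that w'(ρ) ≥ c_{n,k} ρ^{-1} for all ρ ∈ [2δ, η], and consequently w(2δ) ≤ c_{n,k} (log(2δ) - log η). -/

import Mathlib

open Set

/-- Integration of the ODE in the nonexistence proof: if `n > 2k`, `0 < δ`, `2δ ≤ η < 1`,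
and `w` satisfies `w'(0) = 0`, `w(η) = 0`, `w' ≥ 0`, and
`∂_r(r^{n-k}(w')^k) = C r^{n-1}(r²+δ²)^{-k}` on `(0,η)`, then there is `c > 0` independent
of `δ` with `w'(ρ) ≥ c ρ⁻¹` on `[2δ, η]` and hence `w(2δ) ≤ c (log(2δ) - log η)`. -/
theorem stmt10 (n k : ℕ) (hk : 1 ≤ k) (hn : 2 * k < n) (C : ℝ) (hC : 0 < C) :
    ∃ c : ℝ, 0 < c ∧ ∀ (δ η : ℝ) (w w' : ℝ → ℝ),
      0 < δ → δ < η → η < 1 → 2 * δ ≤ η →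
      (∀ r ∈ Set.Icc (0:ℝ) η, HasDerivAt w (w' r) r) →
      ContinuousOn w' (Set.Icc (0:ℝ) η) →
      (∀ r ∈ Set.Ioo (0:ℝ) η, 0 ≤ w' r) →
      w' 0 = 0 → w η = 0 →
      (∀ r ∈ Set.Ioo (0:ℝ) η,
        HasDerivAt (fun ρ : ℝ => ρ ^ (n - k) * (w' ρ) ^ k)
          (C * r ^ (n - 1) * (r ^ 2 + δ ^ 2) ^ (-(k : ℝ))) r) →
      (∀ ρ ∈ Set.Icc (2 * δ) η, c * ρ⁻¹ ≤ w' ρ) ∧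
        w (2 * δ) ≤ c * (Real.log (2 * δ) - Real.log η) := by
  have hkpos : 0 < k := hk
  set c₁ : ℝ := C * ((2:ℝ) ^ (n + k))⁻¹ with hc₁def
  have hc₁ : 0 < c₁ := by positivity
  refine ⟨c₁ ^ ((1:ℝ)/k), Real.rpow_pos_of_pos hc₁ _, ?_⟩
  set c : ℝ := c₁ ^ ((1:ℝ)/k) with hcdef
  have hcpos : 0 < c := Real.rpow_pos_of_pos hc₁ _
  intro δ η w w' hδ hδη hη1 h2δ hw hw'c hw'nn hw'0 hwη hode
  have hη : 0 < η := hδ.trans hδη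
  -- w' nonneg on all of Icc 0 η
  have hw'nn' : ∀ r ∈ Icc (0:ℝ) η, 0 ≤ w' r := by
    intro r hr
    rcases eq_or_lt_of_le hr.1 with h0 | h0
    · rw [← h0, hw'0]
    rcases eq_or_lt_of_le hr.2 with hηr | hηr
    · subst hηr
      have hten : Filter.Tendsto w' (nhdsWithin r (Ioo 0 r)) (nhds (w' r)) :=
        ((hw'c r hr).mono Ioo_subset_Icc_self)
      have hne : (nhdsWithin r (Ioo (0:ℝ) r)).NeBot := right_nhdsWithin_Ioo_neBot h0
      refine ge_of_tendsto hten ?_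
      filter_upwards [self_mem_nhdsWithin] with x hx
      exact hw'nn x hx
    · exact hw'nn r ⟨h0, hηr⟩
  -- key bound
  have key : ∀ ρ ∈ Icc (2*δ) η, c ≤ ρ * w' ρ := by
    intro ρ hρ
    have hρpos : 0 < ρ := lt_of_lt_of_le (by linarith) hρ.1
    have hρη : ρ ≤ η := hρ.2
    have hhalf : δ ≤ ρ/2 := by linarith [hρ.1]
    set g : ℝ → ℝ := fun x => x ^ (n-k) * (w' x) ^ k with hg
    have hDsub : Icc (ρ/2) ρ ⊆ Icc (0:ℝ) η := fun x hx => ⟨by linarith [hx.1], le_trans hx.2 hρη⟩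
    have hintsub : Ioo (ρ/2) ρ ⊆ Ioo (0:ℝ) η := fun x hx => ⟨by linarith [hx.1], lt_of_lt_of_le hx.2 hρη⟩
    have hgc : ContinuousOn g (Icc (ρ/2) ρ) :=
      (continuous_pow _).continuousOn.mul ((hw'c.mono hDsub).pow k)
    have hgd : DifferentiableOn ℝ g (interior (Icc (ρ/2) ρ)) := by
      rw [interior_Icc]
      exact fun x hx => ((hode x (hintsub hx)).differentiableAt).differentiableWithinAt
    set m : ℝ := C * (ρ/2)^(n-1) * ((2*ρ^2)^k)⁻¹ with hm_def
    have hm : ∀ x ∈ interior (Icc (ρ/2) ρ), m ≤ deriv g x := by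
      rw [interior_Icc]
      intro x hx
      rw [(hode x (hintsub hx)).deriv]
      have hxpos : 0 < x := by have := hx.1; linarith
      have hrw : (x^2+δ^2 : ℝ) ^ (-(k:ℝ)) = ((x^2+δ^2)^k)⁻¹ := by
        rw [← Real.rpow_natCast (x^2+δ^2) k, ← Real.rpow_neg (by positivity)]
      rw [hrw, hm_def]
      have h1 : (ρ/2)^(n-1) ≤ x^(n-1) := pow_le_pow_left₀ (by linarith) (le_of_lt hx.1) _
      have h2 : (x^2+δ^2)^k ≤ (2*ρ^2)^k := by
        apply pow_le_pow_left₀ (by positivity)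
        nlinarith [hx.2, hhalf, hδ, hρpos]
      gcongr
    have hmem1 : ρ/2 ∈ Icc (ρ/2) ρ := ⟨le_refl _, by linarith⟩
    have hmem2 : ρ ∈ Icc (ρ/2) ρ := ⟨by linarith, le_refl _⟩
    have hMVT := (convex_Icc (ρ/2) ρ).mul_sub_le_image_sub_of_le_deriv hgc hgd hm
      (ρ/2) hmem1 ρ hmem2 (by linarith)
    have hg2 : 0 ≤ g (ρ/2) := by
      have := hw'nn' (ρ/2) (hDsub hmem1)
      simp only [hg]
      positivity
    have hgρ : m * (ρ/2) ≤ g ρ := by nlinarith [hMVT, hg2]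
    -- compute: c₁ * ρ^(n-2k) ≤ m * (ρ/2)
    have hn1 : (n-1) + 1 = n := by omega
    have hcomp : c₁ * ρ^(n-2*k) = m * (ρ/2) := by
      have hmval : m * (ρ/2) = C * (ρ/2)^n * ((2*ρ^2)^k)⁻¹ := by
        have hp : (ρ/2:ℝ)^(n-1) * (ρ/2) = (ρ/2)^n := by rw [← pow_succ, hn1]
        rw [hm_def, ← hp]; ring
      have hsplit : ρ ^ n = ρ^(n-2*k) * ρ^(2*k) := by
        rw [← pow_add, Nat.sub_add_cancel (by omega)]
      rw [hmval, div_pow, hsplit, mul_pow, ← pow_mul, hc₁def, pow_add]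
      have hρne : (ρ:ℝ) ≠ 0 := ne_of_gt hρpos
      field_simp
    -- deduce c₁ ≤ (ρ * w' ρ)^k
    have hgval : g ρ = ρ^(n-2*k) * (ρ * w' ρ)^k := by
      simp only [hg, mul_pow]
      rw [show n - k = (n - 2*k) + k by omega, pow_add]
      ring
    have hpow : c₁ ≤ (ρ * w' ρ)^k := by
      have h := hgρ
      rw [← hcomp, hgval] at h
      have hρnk : (0:ℝ) < ρ^(n-2*k) := by positivity
      exact le_of_mul_le_mul_left (by linarith [h]) hρnk
    -- take k-th roots
    have hnn : 0 ≤ ρ * w' ρ := mul_nonneg (le_of_lt hρpos) (hw'nn' ρ (hDsub hmem2))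
    have := Real.rpow_le_rpow (le_of_lt hc₁) hpow (by positivity : (0:ℝ) ≤ (1:ℝ)/k)
    rwa [← Real.rpow_natCast (ρ * w' ρ) k, ← Real.rpow_mul hnn,
      mul_one_div, div_self (by exact_mod_cast hkpos.ne' : (k:ℝ) ≠ 0), Real.rpow_one] at this
  constructor
  · intro ρ hρ
    have hρpos : 0 < ρ := lt_of_lt_of_le (by linarith) hρ.1
    have := key ρ hρ
    rw [mul_inv_le_iff₀ hρpos]
    linarith [this]
  · -- second part: monotonicity of w x - c * log x
    set h : ℝ → ℝ := fun x => w x - c * Real.log x with hh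
    have hsub : Icc (2*δ) η ⊆ Icc (0:ℝ) η := fun x hx => ⟨by linarith [hx.1], hx.2⟩
    have hd : ∀ x ∈ Icc (2*δ) η, HasDerivAt h (w' x - c * x⁻¹) x := by
      intro x hx
      have hxpos : 0 < x := lt_of_lt_of_le (by linarith) hx.1
      exact (hw x (hsub hx)).sub ((Real.hasDerivAt_log (ne_of_gt hxpos)).const_mul c)
    have hmono : MonotoneOn h (Icc (2*δ) η) := by
      apply monotoneOn_of_deriv_nonneg (convex_Icc _ _)
      · exact fun x hx => (hd x hx).continuousAt.continuousWithinAt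
      · rw [interior_Icc]
        exact fun x hx => ((hd x (Ioo_subset_Icc_self hx)).differentiableAt).differentiableWithinAt
      · rw [interior_Icc]
        intro x hx
        rw [(hd x (Ioo_subset_Icc_self hx)).deriv]
        have hxI : x ∈ Icc (2*δ) η := Ioo_subset_Icc_self hx
        have hxpos : 0 < x := lt_of_lt_of_le (by linarith) hxI.1
        have := key x hxI
        have : c * x⁻¹ ≤ w' x := by
          rw [mul_inv_le_iff₀ hxpos]; linarith [key x hxI]
        linarith
    have hle := hmono (left_mem_Icc.mpr h2δ) (right_mem_Icc.mpr h2δ) h2δ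
    simp only [hh, hwη] at hle
    linarith [hle]
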